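/- arXiv:2604.24994 — 3 statements merged into one kernel-verified Lean document; each statement's English description precedes it below -/
import Mathlib

section
/- For a set of Voronoi sites in ℝⁿ and a camera point Q, if a point x' of the Voronoi cell of site P' lies strictly between Q and a point x of the Voronoi cell of site P (i.e., x' = λx + (1-λ)Q for some λ ∈ (0,1)), then dist(Q, P') ≤ dist(Q, P). -/
/-- Painter's ordering for Voronoi diagrams: if a point `x'` of the Voronoi cell of site
`P i'` lies strictly between the camera `Q` and a point `x` of the Voronoi cell of site
`P i`, then `dist Q (P i') ≤ dist Q (P i)`. -/
theorem voronoi_painter {n N : ℕ} (P : Fin N → EuclideanSpace ℝ (Fin n))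
    (i i' : Fin N) (Q x x' : EuclideanSpace ℝ (Fin n))
    (hx : ∀ j, ‖x - P i‖ ≤ ‖x - P j‖)
    (hx' : ∀ j, ‖x' - P i'‖ ≤ ‖x' - P j‖)
    (l : ℝ) (hl : l ∈ Set.Ioo (0:ℝ) 1)
    (hseg : x' = l • x + (1 - l) • Q) :
    dist Q (P i') ≤ dist Q (P i) := by
  obtain ⟨hl0, hl1⟩ := hl
  set A := P i with hA
  set B := P i' with hB
  have h1 : ‖x - A‖ ^ 2 ≤ ‖x - B‖ ^ 2 := pow_le_pow_left₀ (norm_nonneg _) (hx i') 2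
  have h2 : ‖x' - B‖ ^ 2 ≤ ‖x' - A‖ ^ 2 := pow_le_pow_left₀ (norm_nonneg _) (hx' i) 2
  have key : ‖x' - B‖ ^ 2 - ‖x' - A‖ ^ 2
      = l * (‖x - B‖ ^ 2 - ‖x - A‖ ^ 2) + (1 - l) * (‖Q - B‖ ^ 2 - ‖Q - A‖ ^ 2) := by
    subst hseg
    simp only [← real_inner_self_eq_norm_sq, inner_sub_left, inner_sub_right,
      inner_add_left, inner_add_right, real_inner_smul_left, real_inner_smul_right]
    rw [real_inner_comm x Q, real_inner_comm x A, real_inner_comm x B,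
      real_inner_comm Q A, real_inner_comm Q B]
    ring
  have hQ : ‖Q - B‖ ^ 2 ≤ ‖Q - A‖ ^ 2 := by nlinarith
  have hfin : ‖Q - B‖ ≤ ‖Q - A‖ := by
    have := Real.sqrt_le_sqrt hQ
    rwa [Real.sqrt_sq (norm_nonneg _), Real.sqrt_sq (norm_nonneg _)] at this
  rw [dist_eq_norm, dist_eq_norm]
  exact hfin
end

section
/- For a set of weighted sites in ℝⁿ and a camera point Q, if a point x' of the power cell of site (P', ω') lies strictly on the open segment between Q and a point x of the power cell of site (P, ω), then pow(Q, P') ≤ pow(Q, P), where pow(z, P) = ‖z - P‖² - ω_P. Hence sorting cells by power distance from Q yields a valid painter's ordering for the power diagram. -/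
/-- Painter's ordering for power diagrams: if a point `x'` of the power cell of site
`(P i', ω i')` lies strictly on the open segment between the camera `Q` and a point `x`
of the power cell of site `(P i, ω i)`, then `pow(Q, P i') ≤ pow(Q, P i)`, where
`pow(z, P) = ‖z - P‖² - ω_P`. -/
theorem power_painter {n N : ℕ} (P : Fin N → EuclideanSpace ℝ (Fin n)) (ω : Fin N → ℝ)
    (i i' : Fin N) (Q x x' : EuclideanSpace ℝ (Fin n))
    (hx : ∀ j, ‖x - P i‖ ^ 2 - ω i ≤ ‖x - P j‖ ^ 2 - ω j)
    (hx' : ∀ j, ‖x' - P i'‖ ^ 2 - ω i' ≤ ‖x' - P j‖ ^ 2 - ω j)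
    (l : ℝ) (hl : l ∈ Set.Ioo (0:ℝ) 1)
    (hseg : x' = l • x + (1 - l) • Q) :
    ‖Q - P i'‖ ^ 2 - ω i' ≤ ‖Q - P i‖ ^ 2 - ω i := by
  obtain ⟨hl0, hl1⟩ := hl
  have hx1 := hx i'
  have hx2 := hx' i
  have key : ∀ A : EuclideanSpace ℝ (Fin n),
      ‖x' - A‖ ^ 2 = l * ‖x - A‖ ^ 2 + (1 - l) * ‖Q - A‖ ^ 2 - l * (1 - l) * ‖x - Q‖ ^ 2 := by
    intro A
    have h1 : x' - A = l • (x - A) + (1 - l) • (Q - A) := by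
      rw [hseg]; module
    have h2 : x - Q = (x - A) - (Q - A) := by abel
    have h3 : ‖x - Q‖ ^ 2
        = ‖x - A‖ ^ 2 - 2 * inner ℝ (x - A) (Q - A) + ‖Q - A‖ ^ 2 := by
      rw [h2, @norm_sub_sq_real]
    rw [h1, @norm_add_sq_real,
      norm_smul, norm_smul, real_inner_smul_left, real_inner_smul_right,
      Real.norm_eq_abs, Real.norm_eq_abs, abs_of_pos hl0,
      abs_of_pos (by linarith : (0:ℝ) < 1 - l), h3]
    ring
  have k1 := key (P i)
  have k2 := key (P i')
  nlinarith [hx1, hx2, k1, k2]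
end

section
/- Given weighted sites and a camera Q, the relation Π_{P'} <_Q Π_P defined by pow(Q, P') < pow(Q, P) is a strict partial order on the cells, and any total order extending it renders every ray from Q through the cells in a front-to-back order: along any ray from Q, the sequence of cells entered has nondecreasing power distance of their sites from Q. -/
/-- The painter's relation `pow(Q, P i) < pow(Q, P j)` is a strict partial order on the
cells, and along any ray from the camera `Q` the cells are entered in order of
nondecreasing power distance of their sites from `Q`. -/
theorem painter_order_front_to_back {n N : ℕ}
    (P : Fin N → EuclideanSpace ℝ (Fin n)) (ω : Fin N → ℝ)
    (Q : EuclideanSpace ℝ (Fin n)) :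
    (∀ i : Fin N, ¬ (‖Q - P i‖ ^ 2 - ω i < ‖Q - P i‖ ^ 2 - ω i)) ∧
    (∀ i j k : Fin N, ‖Q - P i‖ ^ 2 - ω i < ‖Q - P j‖ ^ 2 - ω j →
      ‖Q - P j‖ ^ 2 - ω j < ‖Q - P k‖ ^ 2 - ω k →
      ‖Q - P i‖ ^ 2 - ω i < ‖Q - P k‖ ^ 2 - ω k) ∧
    (∀ d : EuclideanSpace ℝ (Fin n), ‖d‖ = 1 → ∀ t t' : ℝ, 0 ≤ t → t < t' →
      ∀ i j : Fin N,
        (∀ k, ‖(Q + t • d) - P i‖ ^ 2 - ω i ≤ ‖(Q + t • d) - P k‖ ^ 2 - ω k) →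
        (∀ k, ‖(Q + t' • d) - P j‖ ^ 2 - ω j ≤ ‖(Q + t' • d) - P k‖ ^ 2 - ω k) →
        ‖Q - P i‖ ^ 2 - ω i ≤ ‖Q - P j‖ ^ 2 - ω j) := by
  refine ⟨fun i => lt_irrefl _, fun i j k h1 h2 => h1.trans h2, ?_⟩
  intro d hd t t' ht htt' i j hi hj
  have hexp : ∀ (k : Fin N) (s : ℝ),
      ‖(Q + s • d) - P k‖ ^ 2
        = ‖Q - P k‖ ^ 2 + 2 * s * (inner ℝ (Q - P k) d : ℝ) + s ^ 2 := by
    intro k s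
    have h1 : (Q + s • d) - P k = (Q - P k) + s • d := by abel
    rw [h1, @norm_add_sq_real, real_inner_smul_right, norm_smul, mul_pow]
    simp [hd, abs_sq]
    ring
  have h1 := hi j
  have h2 := hj i
  rw [hexp i t, hexp j t, hexp j t', hexp i t'] at *
  nlinarith [h1, h2, ht, htt']
end
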